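/- The function z ↦ −log Φ(z) is convex on ℝ; equivalently, the negative Hessian of the probit log-likelihood, φ(z)²/Φ(z)² + zφ(z)/Φ(z), is strictly positive for all real z. -/

import Mathlib

open Real

/-- The standard normal density. -/
noncomputable def stdNormalPDF (z : ℝ) : ℝ :=
  Real.exp (-z ^ 2 / 2) / Real.sqrt (2 * Real.pi)

/-- The standard normal cumulative distribution function. -/
noncomputable def stdNormalCDF (z : ℝ) : ℝ :=
  ∫ t in Set.Iic z, stdNormalPDF t

section Aux

lemma stdNormalPDF_pos (z : ℝ) : 0 < stdNormalPDF z :=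
  div_pos (Real.exp_pos _) (Real.sqrt_pos.2 (by positivity))

lemma stdNormalPDF_cont : Continuous stdNormalPDF := by
  unfold stdNormalPDF; fun_prop

lemma stdNormalPDF_integrable : MeasureTheory.Integrable stdNormalPDF := by
  have h := (integrable_exp_neg_mul_sq (by norm_num : (0:ℝ) < 1/2)).div_const
    (Real.sqrt (2 * Real.pi))
  convert h using 2 with x
  unfold stdNormalPDF
  ring_nf

lemma id_mul_stdNormalPDF_integrable :
    MeasureTheory.Integrable (fun t => t * stdNormalPDF t) := by
  have h := (integrable_mul_exp_neg_mul_sq (by norm_num : (0:ℝ) < 1/2)).div_const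
    (Real.sqrt (2 * Real.pi))
  convert h using 2 with x
  unfold stdNormalPDF
  ring_nf

lemma stdNormalCDF_pos (z : ℝ) : 0 < stdNormalCDF z := by
  unfold stdNormalCDF
  rw [MeasureTheory.setIntegral_pos_iff_support_of_nonneg_ae
    (Filter.Eventually.of_forall fun t => (stdNormalPDF_pos t).le)
    stdNormalPDF_integrable.integrableOn]
  have hsupp : Function.support stdNormalPDF = Set.univ := by
    ext t; simp [(stdNormalPDF_pos t).ne']
  rw [hsupp, Set.univ_inter, Real.volume_Iic]
  simp

lemma stdNormalCDF_hasDerivAt (z : ℝ) :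
    HasDerivAt stdNormalCDF (stdNormalPDF z) z := by
  have hkey : stdNormalCDF = fun u => stdNormalCDF 0 + ∫ t in (0:ℝ)..u, stdNormalPDF t := by
    funext u
    rw [← intervalIntegral.integral_Iic_sub_Iic stdNormalPDF_integrable.integrableOn
      stdNormalPDF_integrable.integrableOn]
    unfold stdNormalCDF
    ring
  rw [hkey]
  exact (intervalIntegral.integral_hasDerivAt_right
    (stdNormalPDF_integrable.intervalIntegrable)
    (stdNormalPDF_cont.stronglyMeasurableAtFilter _ _)
    stdNormalPDF_cont.continuousAt).const_add _

lemma stdNormalPDF_hasDerivAt (z : ℝ) :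
    HasDerivAt stdNormalPDF (-z * stdNormalPDF z) z := by
  have h1 : HasDerivAt (fun t : ℝ => -t ^ 2 / 2) (-z) z := by
    have := ((hasDerivAt_pow 2 z).neg).div_const 2
    refine this.congr_deriv ?_
    ring
  have h2 := (h1.exp).div_const (Real.sqrt (2 * Real.pi))
  refine h2.congr_deriv ?_
  unfold stdNormalPDF
  ring

lemma stdNormalPDF_tendsto_atBot : Filter.Tendsto stdNormalPDF Filter.atBot (nhds 0) := by
  have hsq : Filter.Tendsto (fun z : ℝ => z ^ 2) Filter.atBot Filter.atTop := by
    have habs : Filter.Tendsto (fun z : ℝ => |z|) Filter.atBot Filter.atTop :=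
      Filter.tendsto_abs_atBot_atTop
    have hpow : Filter.Tendsto (fun x : ℝ => x ^ 2) Filter.atTop Filter.atTop :=
      Filter.tendsto_pow_atTop (by norm_num)
    have hcomp := hpow.comp habs
    simpa [Function.comp_def, sq_abs] using hcomp
  have h1 : Filter.Tendsto (fun z : ℝ => -z ^ 2 / 2) Filter.atBot Filter.atBot := by
    apply Filter.Tendsto.atBot_div_const (by norm_num : (0:ℝ) < 2)
    exact Filter.tendsto_neg_atTop_atBot.comp hsq
  have h2 := (Real.tendsto_exp_atBot.comp h1).div_const (Real.sqrt (2 * Real.pi))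
  simpa only [Function.comp_def, zero_div, stdNormalPDF.eq_unfold] using h2

lemma integral_id_mul_stdNormalPDF (z : ℝ) :
    ∫ t in Set.Iic z, t * stdNormalPDF t = -stdNormalPDF z := by
  have := MeasureTheory.integral_Iic_of_hasDerivAt_of_tendsto'
    (f := fun t => -stdNormalPDF t) (f' := fun t => t * stdNormalPDF t) (a := z) (m := 0)
    (fun x _ => by simpa [Pi.neg_def] using (stdNormalPDF_hasDerivAt x).neg)
    id_mul_stdNormalPDF_integrable.integrableOn
    (by simpa using stdNormalPDF_tendsto_atBot.neg)
  simpa using this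

lemma key_pos (z : ℝ) : 0 < stdNormalPDF z + z * stdNormalCDF z := by
  rcases le_or_gt 0 z with hz | hz
  · have := stdNormalPDF_pos z
    have := mul_nonneg hz (stdNormalCDF_pos z).le
    linarith
  · -- z < 0 : show stdNormalCDF z < stdNormalPDF z / (-z)
    have hzne : z ≠ 0 := hz.ne
    set g : ℝ → ℝ := fun t => (t / z) * stdNormalPDF t with hg
    have hgint : MeasureTheory.Integrable g := by
      have := id_mul_stdNormalPDF_integrable.const_mul (1 / z)
      convert this using 2 with t
      simp [hg]; ring
    have hintg : ∫ t in Set.Iic z, g t = stdNormalPDF z / (-z) := by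
      have : ∫ t in Set.Iic z, g t = (1 / z) * ∫ t in Set.Iic z, t * stdNormalPDF t := by
        rw [← MeasureTheory.integral_const_mul]
        congr 1 with t
        simp [hg]; ring
      rw [this, integral_id_mul_stdNormalPDF]
      field_simp [hzne]
    have hlt : stdNormalCDF z < ∫ t in Set.Iic z, g t := by
      have hpos : 0 < ∫ t in Set.Iic z, (g t - stdNormalPDF t) := by
        rw [MeasureTheory.setIntegral_pos_iff_support_of_nonneg_ae]
        · -- measure of support positive
          have hsub : Set.Iio z ⊆ Function.support (fun t => g t - stdNormalPDF t) ∩ Set.Iic z := by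
            intro t ht
            have htz : (1 : ℝ) < t / z := by
              rw [lt_div_iff_of_neg hz]
              simpa using ht.out
            constructor
            · have : 0 < (t / z - 1) * stdNormalPDF t :=
                mul_pos (by linarith) (stdNormalPDF_pos t)
              simp only [Function.mem_support, hg]
              intro habs
              nlinarith [stdNormalPDF_pos t]
            · exact le_of_lt (Set.mem_Iio.mp ht)
          have := MeasureTheory.measure_mono (μ := MeasureTheory.volume) hsub
          have hIio : MeasureTheory.volume (Set.Iio z) = ⊤ := Real.volume_Iio
          rw [hIio] at this
          exact lt_of_lt_of_le (by simp) this
        · -- a.e. nonneg on Iic z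
          filter_upwards [MeasureTheory.ae_restrict_mem measurableSet_Iic] with t ht
          simp only [Pi.zero_apply]
          have htz : (1 : ℝ) ≤ t / z := by
            rw [le_div_iff_of_neg hz]
            simpa using ht
          have : 0 ≤ (t / z - 1) * stdNormalPDF t :=
            mul_nonneg (by linarith) (stdNormalPDF_pos t).le
          simp only [hg]
          nlinarith [stdNormalPDF_pos t]
        · exact (hgint.sub stdNormalPDF_integrable).integrableOn
      rw [MeasureTheory.integral_sub hgint.integrableOn
        stdNormalPDF_integrable.integrableOn] at hpos
      unfold stdNormalCDF
      linarith
    rw [hintg] at hlt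
    have : -z * stdNormalCDF z < stdNormalPDF z := by
      have hnz : 0 < -z := by linarith
      calc -z * stdNormalCDF z < -z * (stdNormalPDF z / (-z)) := by
            exact mul_lt_mul_of_pos_left hlt hnz
        _ = stdNormalPDF z := by field_simp
    linarith

end Aux

/-- `z ↦ −log Φ(z)` is convex on `ℝ`; equivalently, the negative Hessian of the
probit log-likelihood `φ(z)²/Φ(z)² + zφ(z)/Φ(z)` is strictly positive for all
real `z`. -/
theorem neg_log_probit_convex :
    ConvexOn ℝ Set.univ (fun z : ℝ => -Real.log (stdNormalCDF z)) ∧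
    ∀ z : ℝ, 0 < stdNormalPDF z ^ 2 / stdNormalCDF z ^ 2
        + z * stdNormalPDF z / stdNormalCDF z := by
  have hexpr : ∀ z : ℝ, stdNormalPDF z ^ 2 / stdNormalCDF z ^ 2
      + z * stdNormalPDF z / stdNormalCDF z
      = stdNormalPDF z * (stdNormalPDF z + z * stdNormalCDF z) / stdNormalCDF z ^ 2 := by
    intro z
    have h := (stdNormalCDF_pos z).ne'
    field_simp
  have hpos : ∀ z : ℝ, 0 < stdNormalPDF z ^ 2 / stdNormalCDF z ^ 2
      + z * stdNormalPDF z / stdNormalCDF z := by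
    intro z
    rw [hexpr z]
    exact div_pos (mul_pos (stdNormalPDF_pos z) (key_pos z))
      (pow_pos (stdNormalCDF_pos z) 2)
  refine ⟨?_, hpos⟩
  -- derivatives
  have hd1 : ∀ z : ℝ, HasDerivAt (fun u : ℝ => -Real.log (stdNormalCDF u))
      (-(stdNormalPDF z / stdNormalCDF z)) z := by
    intro z
    exact ((stdNormalCDF_hasDerivAt z).log (stdNormalCDF_pos z).ne').neg
  have hderiv1 : deriv (fun u : ℝ => -Real.log (stdNormalCDF u))
      = fun z => -(stdNormalPDF z / stdNormalCDF z) := by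
    funext z; exact (hd1 z).deriv
  have hd2 : ∀ z : ℝ, HasDerivAt (fun u : ℝ => -(stdNormalPDF u / stdNormalCDF u))
      (stdNormalPDF z ^ 2 / stdNormalCDF z ^ 2
        + z * stdNormalPDF z / stdNormalCDF z) z := by
    intro z
    have h := ((stdNormalPDF_hasDerivAt z).div (stdNormalCDF_hasDerivAt z)
      (stdNormalCDF_pos z).ne').neg
    refine h.congr_deriv ?_
    have hc := (stdNormalCDF_pos z).ne'
    field_simp
    ring
  apply convexOn_of_deriv2_nonneg convex_univ
  · exact fun x _ => (hd1 x).differentiableAt.continuousAt.continuousWithinAt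
  · intro x _
    exact (hd1 x).differentiableAt.differentiableWithinAt
  · intro x _
    rw [hderiv1]
    exact (hd2 x).differentiableAt.differentiableWithinAt
  · intro x _
    have : deriv^[2] (fun u : ℝ => -Real.log (stdNormalCDF u)) x
        = stdNormalPDF x ^ 2 / stdNormalCDF x ^ 2
          + x * stdNormalPDF x / stdNormalCDF x := by
      simp only [Function.iterate_succ, Function.iterate_zero, Function.comp_apply, id]
      rw [hderiv1]
      exact (hd2 x).deriv
    rw [this]
    exact (hpos x).le
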